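/- Let g be a compact Lie algebra with Ad-invariant inner product ⟨·,·⟩, h ⊆ g a subalgebra, v = h^⊥, and x ∈ v. Define j_x = {η ∈ v : ⟨η, [x, h]⟩ = 0} and the skew form Λ_x(η₁, η₂) = −⟨x, [η₁, η₂]⟩ on j_x. Then the kernel of Λ_x on j_x equals pr_v(g_x), the orthogonal projection onto v of the centralizer g_x of x in g. -/

import Mathlib

/-- Compact Lie algebra `g` with `Ad`-invariant inner product `B`,
subalgebra `h`, `v = h^⊥`, `x ∈ v`.  Let
`j_x = {η ∈ v : B η ⁅x, a⁆ = 0 for all a ∈ h}` and let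
`Λ_x(η₁, η₂) = − B x ⁅η₁, η₂⁆` be the induced skew form on `j_x`.  Then for
`η ∈ j_x`: `η` lies in the kernel of `Λ_x` (i.e. `Λ_x(η, ·) = 0` on `j_x`) iff
`η ∈ pr_v(g_x)`, i.e. iff there exists `ξ` with `⁅ξ, x⁆ = 0` and `ξ - η ∈ h`. -/
theorem stmt4 {g : Type*} [LieRing g] [LieAlgebra ℝ g] [FiniteDimensional ℝ g]
    (B : LinearMap.BilinForm ℝ g)
    (hsymm : ∀ x y : g, B x y = B y x)
    (hpos : ∀ x : g, x ≠ 0 → 0 < B x x)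
    (hinv : ∀ a x y : g, B ⁅a, x⁆ y + B x ⁅a, y⁆ = 0)
    (h : LieSubalgebra ℝ g)
    (V : Submodule ℝ g) (hV : V = B.orthogonal h.toSubmodule)
    (x : g) (hx : x ∈ V)
    (η : g) (hηV : η ∈ V) (hηj : ∀ a ∈ h, B η ⁅x, a⁆ = 0) :
    ((∀ η₂ ∈ V, (∀ a ∈ h, B η₂ ⁅x, a⁆ = 0) → -(B x ⁅η, η₂⁆) = 0) ↔
      (∃ ξ : g, ⁅ξ, x⁆ = 0 ∧ ξ - η ∈ h.toSubmodule)) := by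
  have hrefl : B.IsRefl := fun a b hab => by rw [hsymm]; exact hab
  have hnd : B.Nondegenerate := by
    refine (LinearMap.IsRefl.nondegenerate_iff_separatingLeft hrefl).mpr ?_
    intro z hz
    by_contra h0
    exact (hpos z h0).ne' (hz z)
  -- x ⊥ h, as a two-sided statement
  have hxh : ∀ a ∈ h, B x a = 0 := by
    intro a ha
    rw [hsymm]
    exact (hV ▸ hx) a ha
  -- ⁅x, a⁆ ⊥ b for a b ∈ h
  have hWh : ∀ a ∈ h, ∀ b ∈ h, B a ⁅x, b⁆ = 0 := by
    intro a ha b hb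
    have h1 := hinv x a b
    have h2 := hinv a x b
    have h3 : B x ⁅a, b⁆ = 0 := hxh ⁅a, b⁆ (h.lie_mem ha hb)
    have h4 : B ⁅a, x⁆ b = 0 := by linarith
    have h5 : B ⁅x, a⁆ b = 0 := by
      rw [← lie_skew, map_neg, LinearMap.neg_apply, h4, neg_zero]
    linarith
  -- ⁅η, x⁆ ⊥ h
  have hηxh : ∀ a ∈ h, B a ⁅η, x⁆ = 0 := by
    intro a ha
    have h1 := hinv x η a
    have h2 : B η ⁅x, a⁆ = 0 := hηj a ha
    have h3 : B ⁅x, η⁆ a = 0 := by linarith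
    have h4 : B ⁅η, x⁆ a = 0 := by
      rw [← lie_skew η x, map_neg, LinearMap.neg_apply, h3, neg_zero]
    rw [hsymm]; exact h4
  constructor
  · -- forward direction
    intro Hker
    -- W = (ad x)(h)
    set W : Submodule ℝ g := h.toSubmodule.map (LieAlgebra.ad ℝ g x) with hW
    -- restriction of B to h is nondegenerate
    have hres : (B.restrict h.toSubmodule).Nondegenerate := by
      refine (LinearMap.IsRefl.nondegenerate_iff_separatingLeft (B := B.restrict h.toSubmodule) (fun a b hab => hrefl _ _ hab)).mpr ?_
      intro ⟨a, ha⟩ haz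
      have : B a a = 0 := haz ⟨a, ha⟩
      ext
      by_contra h0
      exact (hpos a h0).ne' this
    have hcompl := LinearMap.BilinForm.isCompl_orthogonal_of_restrict_nondegenerate hrefl hres
    have hsup : h.toSubmodule ⊔ B.orthogonal h.toSubmodule = ⊤ := by
      simpa [codisjoint_iff] using hcompl.codisjoint
    -- key claim: ⁅η, x⁆ ∈ (W^⊥)^⊥
    have hkey : ⁅η, x⁆ ∈ B.orthogonal (B.orthogonal W) := by
      intro z hz
      -- decompose z = a + v, a ∈ h, v ∈ V
      have hzT : z ∈ h.toSubmodule ⊔ B.orthogonal h.toSubmodule := by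
        rw [hsup]; trivial
      obtain ⟨a, ha, v, hv, rfl⟩ := Submodule.mem_sup.mp hzT
      have hvV : v ∈ V := hV ▸ hv
      -- a ⊥ W, hence v ⊥ W
      have hvj : ∀ b ∈ h, B v ⁅x, b⁆ = 0 := by
        intro b hb
        have hmem : ⁅x, b⁆ ∈ W := ⟨b, hb, rfl⟩
        have h1 : B ⁅x, b⁆ (a + v) = 0 := hz ⁅x, b⁆ hmem
        have h2 : B a ⁅x, b⁆ = 0 := hWh a ha b hb
        have h3 : B (a + v) ⁅x, b⁆ = 0 := by rw [hsymm]; exact h1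
        rw [map_add, LinearMap.add_apply] at h3
        linarith [h3, h2]
      have h5 : B x ⁅η, v⁆ = 0 := by
        have := Hker v hvV hvj
        linarith
      have h6 : B ⁅η, x⁆ v = 0 := by
        have := hinv η x v
        linarith
      -- conclude
      show B (a + v) ⁅η, x⁆ = 0
      rw [map_add, LinearMap.add_apply, hηxh a ha, hsymm, h6, add_zero]
    rw [LinearMap.BilinForm.orthogonal_orthogonal hnd hrefl] at hkey
    obtain ⟨a, ha, hax⟩ := hkey
    refine ⟨η + a, ?_, by simpa using ha⟩
    have : (LieAlgebra.ad ℝ g x) a = ⁅x, a⁆ := rfl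
    rw [this] at hax
    rw [add_lie, ← hax, ← lie_skew x a]
    exact neg_add_cancel (⁅a, x⁆ : g)
  · -- backward direction
    rintro ⟨ξ, hξx, hξη⟩ η₂ hη₂V hη₂j
    have h1 : B x ⁅ξ, η₂⁆ = 0 := by
      have := hinv ξ x η₂
      rw [hξx] at this
      simp at this
      linarith [this]
    have h2 : B x ⁅ξ - η, η₂⁆ = 0 := by
      have hinv2 := hinv (ξ - η) x η₂
      have h3 : B η₂ ⁅x, ξ - η⁆ = 0 := hη₂j (ξ - η) hξη
      have h4 : B ⁅x, ξ - η⁆ η₂ = 0 := by rw [hsymm]; exact h3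
      have h5 : B ⁅ξ - η, x⁆ η₂ = 0 := by
        rw [← lie_skew (ξ - η) x, map_neg, LinearMap.neg_apply, h4, neg_zero]
      linarith
    have : B x ⁅η, η₂⁆ = 0 := by
      have hsub : (⁅ξ, η₂⁆ : g) - ⁅ξ - η, η₂⁆ = ⁅η, η₂⁆ := by
        rw [sub_lie]; abel
      rw [← hsub, map_sub, h1, h2, sub_zero]
    rw [this, neg_zero]
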